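/- arXiv:2303.03762 — 9 statements merged into one kernel-verified Lean document; each statement's English description precedes it below -/
import Mathlib

section
/- Let m ≥ 0 be an integer, let G be a connected graph of order n, let u ∈ V(G), and let Y ⊆ V(G) \ {u}. If δ(G) ≥ 2√n + m + |Y|, then there exists a set X ⊆ N_G(u) \ Y with |X| = m such that G − X is connected. -/
open SimpleGraph

noncomputable def degN {V : Type*} (G : SimpleGraph V) (v : V) : ℕ := (G.neighborSet v).ncard

def rel {V : Type*} (G : SimpleGraph V) (A : Set V) : V → V → Prop :=
  fun a b => G.Adj a b ∧ a ∉ A ∧ b ∉ A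

lemma step {V : Type*} [Fintype V] (G : SimpleGraph V) (u : V) (Y : Set V) (m k : ℕ)
    (hkm : k < m)
    (hdelta : ∀ v : V, 2 * Real.sqrt (Fintype.card V) + m + Y.ncard ≤ (degN G v : ℝ))
    (X : Set V) (hXS : X ⊆ G.neighborSet u \ Y) (hcard : X.ncard = k)
    (hP : ∀ v ∉ X, Relation.ReflTransGen (rel G X) u v) :
    ∃ y ∈ (G.neighborSet u \ Y) \ X,
      ∀ v ∉ insert y X, Relation.ReflTransGen (rel G (insert y X)) u v := by
  classical
  set n := Fintype.card V with hn
  set rn := Real.sqrt n with hrn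
  have huX : u ∉ X := fun h => G.irrefl (hXS h).1
  by_contra hcon
  push_neg at hcon
  set S := G.neighborSet u \ Y with hS
  set D : V → Set V := fun y =>
    {v | v ∉ X ∧ v ≠ y ∧ ¬ Relation.ReflTransGen (rel G (insert y X)) u v} with hD
  -- u is not in insert y X for y ∈ S
  have huIns : ∀ y ∈ S \ X, u ∉ insert y X := by
    intro y hy h
    rcases Set.mem_insert_iff.1 h with h | h
    · exact G.irrefl (h ▸ hy.1.1)
    · exact huX h
  -- every y in S \ X has a nonempty D y
  have hDne : ∀ y ∈ S \ X, (D y).Nonempty := by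
    intro y hy
    obtain ⟨v, hv1, hv2⟩ := hcon y hy
    exact ⟨v, fun h => hv1 (Set.mem_insert_of_mem _ h),
      fun h => hv1 (h ▸ Set.mem_insert _ _), hv2⟩
  -- vertices of S \ X are never in any D y
  have hSD : ∀ y ∈ S \ X, ∀ z ∈ S \ X, z ∉ D y := by
    intro y hy z hz hzD
    rcases eq_or_ne z y with h | h
    · exact hzD.2.1 h
    · exact hzD.2.2 (Relation.ReflTransGen.single
        ⟨hz.1.1, huIns y hy, fun hm => by
          rcases Set.mem_insert_iff.1 hm with hm | hm
          · exact h hm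
          · exact hz.2 hm⟩)
  have huD : ∀ y, u ∉ D y := fun y h => h.2.2 Relation.ReflTransGen.refl
  -- closure property
  have hclos : ∀ y ∈ S \ X, ∀ v ∈ D y, ∀ w, G.Adj w v → w ∈ insert y X ∨ w ∈ D y := by
    intro y hy v hv w hadj
    by_cases hw : w ∈ insert y X
    · exact Or.inl hw
    · refine Or.inr ⟨fun h => hw (Set.mem_insert_of_mem _ h),
        fun h => hw (h ▸ Set.mem_insert _ _), fun hr => ?_⟩
      exact hv.2.2 (hr.tail ⟨hadj, hw, fun hm => by
        rcases Set.mem_insert_iff.1 hm with hm | hm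
        · exact hv.2.1 hm
        · exact hv.1 hm⟩)
  -- degree bound : each D y is large
  have hbig : ∀ y ∈ S \ X, 2 * rn + 1 ≤ ((D y).ncard : ℝ) := by
    intro y hy
    obtain ⟨v, hv⟩ := hDne y hy
    have hsub : G.neighborSet v ⊆ (D y \ {v}) ∪ insert y X := by
      intro w hw
      rcases hclos y hy v hv w (G.adj_symm hw) with h | h
      · exact Or.inr h
      · exact Or.inl ⟨h, fun hww => G.irrefl (Set.mem_singleton_iff.1 hww ▸ hw)⟩
    have h1 : degN G v ≤ (D y \ {v}).ncard + (insert y X).ncard :=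
      le_trans (Set.ncard_le_ncard hsub (Set.toFinite _)) (Set.ncard_union_le _ _)
    have h2 : (insert y X).ncard ≤ k + 1 := by
      simpa [hcard] using Set.ncard_insert_le y X
    have h3 : (D y \ {v}).ncard = (D y).ncard - 1 := Set.ncard_diff_singleton_of_mem hv
    have h4 : 1 ≤ (D y).ncard := (Set.ncard_pos (Set.toFinite _)).2 ⟨v, hv⟩
    have h5 : degN G v ≤ (D y).ncard + k := by omega
    have h6 := hdelta v
    have h5' : (degN G v : ℝ) ≤ ((D y).ncard : ℝ) + k := by exact_mod_cast h5
    have hm' : (k : ℝ) + 1 ≤ (m : ℝ) := by exact_mod_cast hkm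
    have hY0 : (0 : ℝ) ≤ (Y.ncard : ℝ) := by positivity
    linarith
  -- disjointness of the D y's
  have hdisj : ∀ y ∈ S \ X, ∀ z ∈ S \ X, y ≠ z → Disjoint (D y) (D z) := by
    intro y hy z hz hyz
    have key : ∀ v, Relation.ReflTransGen (rel G X) u v → ¬(v ∈ D y ∧ v ∈ D z) := by
      intro v hv
      induction hv with
      | refl => exact fun h => huD y h.1
      | @tail b c hab hbc ih =>
        intro hc
        rcases hclos y hy c hc.1 b hbc.1 with h1 | h1
        · rcases Set.mem_insert_iff.1 h1 with h1 | h1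
          · subst h1
            rcases hclos z hz c hc.2 b hbc.1 with h2 | h2
            · rcases Set.mem_insert_iff.1 h2 with h2 | h2
              · exact hyz h2
              · exact hbc.2.1 h2
            · exact hSD z hz b hy h2
          · exact hbc.2.1 h1
        · rcases hclos z hz c hc.2 b hbc.1 with h2 | h2
          · rcases Set.mem_insert_iff.1 h2 with h2 | h2
            · exact hSD y hy b (h2 ▸ hz) h1
            · exact hbc.2.1 h2
          · exact ih ⟨h1, h2⟩
    rw [Set.disjoint_left]
    intro v hvy hvz
    exact key v (hP v hvy.1) ⟨hvy, hvz⟩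
  -- counting
  set T : Finset V := (Set.toFinite (S \ X)).toFinset with hT
  set DF : V → Finset V := fun y => (Set.toFinite (D y)).toFinset with hDF
  have hmemT : ∀ {y}, y ∈ T ↔ y ∈ S \ X := by
    intro y; rw [hT, Set.Finite.mem_toFinset]
  have hdisjF : ∀ y ∈ T, ∀ z ∈ T, y ≠ z → Disjoint (DF y) (DF z) := by
    intro y hy z hz hyz
    rw [Finset.disjoint_left]
    intro a ha haz
    rw [hDF, Set.Finite.mem_toFinset] at ha haz
    exact Set.disjoint_left.1 (hdisj y (hmemT.1 hy) z (hmemT.1 hz) hyz) ha haz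
  have hsum : ∑ y ∈ T, (DF y).card = (T.biUnion DF).card := (Finset.card_biUnion hdisjF).symm
  have hle : (T.biUnion DF).card ≤ n := Finset.card_le_univ _
  -- T is large
  have hTcard : 2 * rn + 1 ≤ (T.card : ℝ) := by
    have e1 : T.card = (S \ X).ncard := (Set.ncard_eq_toFinset_card _ _).symm
    have e2 : S.ncard ≤ (S \ X).ncard + X.ncard := by
      refine le_trans (Set.ncard_le_ncard (fun a ha => ?_) (Set.toFinite _)) (Set.ncard_union_le _ _)
      by_cases h : a ∈ X
      · exact Or.inr h
      · exact Or.inl ⟨ha, h⟩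
    have e3 : degN G u ≤ S.ncard + Y.ncard := by
      refine le_trans (Set.ncard_le_ncard (fun a ha => ?_) (Set.toFinite _)) (Set.ncard_union_le _ _)
      by_cases h : a ∈ Y
      · exact Or.inr h
      · exact Or.inl ⟨ha, h⟩
    have h6 := hdelta u
    have e2' : (S.ncard : ℝ) ≤ ((S \ X).ncard : ℝ) + k := by rw [← hcard]; exact_mod_cast e2
    have e3' : (degN G u : ℝ) ≤ (S.ncard : ℝ) + Y.ncard := by exact_mod_cast e3
    have hm' : (k : ℝ) + 1 ≤ (m : ℝ) := by exact_mod_cast hkm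
    rw [e1]
    linarith
  have hsum2 : (T.card : ℝ) * (2 * rn + 1) ≤ ∑ y ∈ T, ((DF y).card : ℝ) := by
    have : ∀ y ∈ T, 2 * rn + 1 ≤ ((DF y).card : ℝ) := by
      intro y hy
      have : (DF y).card = (D y).ncard := (Set.ncard_eq_toFinset_card _ _).symm
      rw [this]
      exact hbig y (hmemT.1 hy)
    calc (T.card : ℝ) * (2 * rn + 1) = ∑ _y ∈ T, (2 * rn + 1) := by
          rw [Finset.sum_const, nsmul_eq_mul]
      _ ≤ _ := Finset.sum_le_sum this
  have hfin : (T.card : ℝ) * (2 * rn + 1) ≤ (n : ℝ) := by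
    refine le_trans hsum2 ?_
    have : ∑ y ∈ T, ((DF y).card : ℝ) = ((∑ y ∈ T, (DF y).card : ℕ) : ℝ) := by
      push_cast; ring
    rw [this, hsum]
    exact_mod_cast hle
  have hrn0 : 0 ≤ rn := Real.sqrt_nonneg _
  have hrnsq : rn ^ 2 = (n : ℝ) := Real.sq_sqrt (by positivity)
  nlinarith [mul_le_mul hTcard (le_refl (2 * rn + 1)) (by linarith) (by linarith)]

lemma rch_reachable {V : Type*} (G : SimpleGraph V) (A : Set V) (u : V) (hu : u ∉ A)
    (v : V) (h : Relation.ReflTransGen (rel G A) u v) (hv : v ∉ A) :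
    (G.induce Aᶜ).Reachable ⟨u, hu⟩ ⟨v, hv⟩ := by
  induction h with
  | refl => rfl
  | tail hab hbc ih =>
    exact (ih hbc.2.1).trans (SimpleGraph.Adj.reachable (by simpa using hbc.1))

lemma conn_rch {V : Type*} (G : SimpleGraph V) (hconn : G.Connected) (u v : V) :
    Relation.ReflTransGen (rel G (∅ : Set V)) u v := by
  have h := (hconn.preconnected u v)
  rw [SimpleGraph.reachable_iff_reflTransGen] at h
  exact Relation.ReflTransGen.mono (show ∀ a b, G.Adj a b → rel G (∅ : Set V) a b from fun a b hab => ⟨hab, by simp, by simp⟩) u v h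

/-- Lemma 2.2: if `G` is connected of order `n`, `u ∈ V(G)`, `Y ⊆ V(G) \ {u}` and
`δ(G) ≥ 2√n + m + |Y|`, then there is `X ⊆ N_G(u) \ Y` with `|X| = m` such that
`G - X` is connected. -/
theorem stmt4 {V : Type*} [Fintype V] (m : ℕ) (G : SimpleGraph V) (hconn : G.Connected)
    (u : V) (Y : Set V) (hY : u ∉ Y)
    (hdelta : ∀ v : V, 2 * Real.sqrt (Fintype.card V) + m + Y.ncard ≤ (degN G v : ℝ)) :
    ∃ X : Set V, X ⊆ G.neighborSet u \ Y ∧ X.ncard = m ∧ (G.induce Xᶜ).Connected := by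
  classical
  have key : ∀ k, k ≤ m → ∃ X : Set V, X ⊆ G.neighborSet u \ Y ∧ X.ncard = k ∧
      ∀ v ∉ X, Relation.ReflTransGen (rel G X) u v := by
    intro k
    induction k with
    | zero => exact fun _ => ⟨∅, by simp, by simp, fun v _ => conn_rch G hconn u v⟩
    | succ k ih =>
      intro hk
      obtain ⟨X, hXS, hcard, hP⟩ := ih (le_of_lt (Nat.lt_of_succ_le hk))
      obtain ⟨y, hy, hy2⟩ := step G u Y m k (Nat.lt_of_succ_le hk) hdelta X hXS hcard hP
      exact ⟨insert y X, Set.insert_subset hy.1 hXS,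
        by rw [Set.ncard_insert_of_notMem hy.2 (Set.toFinite _), hcard], hy2⟩
  obtain ⟨X, hXS, hcard, hP⟩ := key m le_rfl
  have huX : u ∉ X := fun h => G.irrefl (hXS h).1
  refine ⟨X, hXS, hcard, ?_⟩
  haveI : Nonempty ↥Xᶜ := ⟨⟨u, huX⟩⟩
  refine ⟨?_⟩
  have hreach : ∀ a : ↥Xᶜ, (G.induce Xᶜ).Reachable ⟨u, huX⟩ a := by
    rintro ⟨a, haa⟩
    exact rch_reachable G X u huX a (hP a haa) haa
  intro a b
  exact (hreach a).symm.trans (hreach b)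
end

section
/- Let k ≥ 2 and n ≥ 2k+1 be integers. Then every graph G in the family 𝒢_{k,n} is a connected graph of order n and satisfies σ₂(G) = n − 2. -/
open SimpleGraph

/-- `G` together with the partition `L1, L2, L3, L4` satisfies the defining
conditions (L1)–(L5) of the family `𝒢_{k,n}`. -/
def GFamilyWith {V : Type*} (k : ℕ) (G : SimpleGraph V) (L1 L2 L3 L4 : Set V) : Prop :=
  L1.Nonempty ∧ L2.Nonempty ∧ L3.Nonempty ∧ L4.Nonempty ∧
  L1 ∪ L2 ∪ L3 ∪ L4 = Set.univ ∧
  Disjoint L1 L2 ∧ Disjoint L1 L3 ∧ Disjoint L1 L4 ∧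
  Disjoint L2 L3 ∧ Disjoint L2 L4 ∧ Disjoint L3 L4 ∧
  G.IsClique (L1 ∪ L2) ∧ G.IsClique L4 ∧
  (∀ u ∈ L1, ∀ v ∈ L3 ∪ L4, ¬ G.Adj u v) ∧
  (∀ u ∈ L2, (∃ v ∈ L3, G.Adj u v) ∧ (∀ v ∈ L4, ¬ G.Adj u v) ∧ degN G u ≤ k) ∧
  (∀ u ∈ L3, (∃ v ∈ L2, G.Adj u v) ∧ (∀ v ∈ L4, G.Adj u v) ∧
    Nat.card V - (L1 ∪ L2).ncard - 1 ≤ degN G u)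

/-- `G` belongs to the family `𝒢_{k,n}` (membership up to isomorphism). -/
def GFamily {V : Type*} (k : ℕ) (G : SimpleGraph V) : Prop :=
  ∃ L1 L2 L3 L4 : Set V, GFamilyWith k G L1 L2 L3 L4

/-- Proposition 3.1: every `G ∈ 𝒢_{k,n}` (with `k ≥ 2`, `n ≥ 2k+1`) is a connected
graph of order `n` with `σ₂(G) = n - 2`. -/
theorem stmt7 {V : Type*} [Fintype V] (k n : ℕ) (hk : 2 ≤ k) (hn : 2 * k + 1 ≤ n)
    (hcard : Fintype.card V = n) (G : SimpleGraph V) (hG : GFamily k G) :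
    G.Connected ∧
    (∀ u v : V, u ≠ v → ¬ G.Adj u v → n - 2 ≤ degN G u + degN G v) ∧
    (∃ u v : V, u ≠ v ∧ ¬ G.Adj u v ∧ degN G u + degN G v = n - 2) := by
  obtain ⟨L1, L2, L3, L4, h1ne, h2ne, h3ne, h4ne, hunion, d12, d13, d14, d23, d24, d34,
    cl12, cl4, hL1, hL2, hL3⟩ := hG
  set s := (L1 ∪ L2).ncard with hs
  set t := (L3 ∪ L4).ncard with ht
  have hmem : ∀ x : V, x ∈ L1 ∨ x ∈ L2 ∨ x ∈ L3 ∨ x ∈ L4 := by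
    intro x
    have : x ∈ L1 ∪ L2 ∪ L3 ∪ L4 := hunion.symm ▸ Set.mem_univ x
    simpa [Set.mem_union, or_assoc] using this
  have huniv : (L1 ∪ L2) ∪ (L3 ∪ L4) = (Set.univ : Set V) := by
    rw [← Set.union_assoc]; exact hunion
  have hdisj : Disjoint (L1 ∪ L2) (L3 ∪ L4) :=
    Set.disjoint_union_left.mpr ⟨Set.disjoint_union_right.mpr ⟨d13, d14⟩,
      Set.disjoint_union_right.mpr ⟨d23, d24⟩⟩
  have hst : s + t = n := by
    have h1 := Set.ncard_union_eq hdisj (Set.toFinite _) (Set.toFinite _)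
    rw [huniv, Set.ncard_univ, Nat.card_eq_fintype_card, hcard] at h1
    exact h1.symm
  obtain ⟨u1, hu1⟩ := h1ne
  obtain ⟨u2, hu2⟩ := h2ne
  obtain ⟨u4, hu4⟩ := h4ne
  have hs1 : 1 ≤ s :=
    (Set.ncard_pos (Set.toFinite _)).mpr ⟨u1, Or.inl hu1⟩
  have ht1 : 1 ≤ t :=
    (Set.ncard_pos (Set.toFinite _)).mpr ⟨u4, Or.inr hu4⟩
  -- neighbor sets of L1 and L4 vertices
  have nbr1 : ∀ u ∈ L1, G.neighborSet u = (L1 ∪ L2) \ {u} := by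
    intro u hu
    ext v
    simp only [mem_neighborSet, Set.mem_diff, Set.mem_singleton_iff]
    constructor
    · intro hadj
      refine ⟨?_, fun h => G.loopless.irrefl u (h ▸ hadj)⟩
      rcases hmem v with h | h | h | h
      · exact Or.inl h
      · exact Or.inr h
      · exact absurd hadj (hL1 u hu v (Or.inl h))
      · exact absurd hadj (hL1 u hu v (Or.inr h))
    · rintro ⟨hv, hne⟩
      exact cl12 (Or.inl hu) hv (fun h => hne h.symm)
  have nbr4 : ∀ v ∈ L4, G.neighborSet v = (L3 ∪ L4) \ {v} := by
    intro v hv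
    ext w
    simp only [mem_neighborSet, Set.mem_diff, Set.mem_singleton_iff]
    constructor
    · intro hadj
      refine ⟨?_, fun h => G.loopless.irrefl v (h ▸ hadj)⟩
      rcases hmem w with h | h | h | h
      · exact absurd hadj.symm (hL1 w h v (Or.inr hv))
      · exact absurd hadj.symm ((hL2 w h).2.1 v hv)
      · exact Or.inl h
      · exact Or.inr h
    · rintro ⟨hw, hne⟩
      rcases hw with h | h
      · exact ((hL3 w h).2.1 v hv).symm
      · exact cl4 hv h (fun h' => hne h'.symm)
  -- degree facts
  have d1deg : ∀ u ∈ L1, degN G u = s - 1 := by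
    intro u hu
    show (G.neighborSet u).ncard = s - 1
    rw [nbr1 u hu]
    exact Set.ncard_diff_singleton_of_mem (Or.inl hu : u ∈ L1 ∪ L2)
  have d4deg : ∀ u ∈ L4, degN G u = t - 1 := by
    intro u hu
    show (G.neighborSet u).ncard = t - 1
    rw [nbr4 u hu]
    exact Set.ncard_diff_singleton_of_mem (Or.inr hu : u ∈ L3 ∪ L4)
  have d2deg : ∀ u ∈ L2, s ≤ degN G u := by
    intro u hu
    obtain ⟨v3, hv3, hadj⟩ := (hL2 u hu).1
    have hsub : ((L1 ∪ L2) \ {u}) ∪ {v3} ⊆ G.neighborSet u := by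
      rintro w (⟨hw, hne⟩ | hw)
      · exact cl12 (Or.inr hu) hw (fun h => hne (Set.mem_singleton_iff.mpr h.symm))
      · rw [Set.mem_singleton_iff] at hw
        subst hw; exact hadj
    have hv3n : v3 ∉ (L1 ∪ L2) \ {u} := by
      rintro ⟨hw, -⟩
      rcases hw with h | h
      · exact Set.disjoint_left.mp d13 h hv3
      · exact Set.disjoint_left.mp d23 h hv3
    have hcal := Set.ncard_union_eq (Set.disjoint_singleton_right.mpr hv3n)
      (Set.toFinite _) (Set.toFinite _)
    have hdiff : ((L1 ∪ L2) \ {u}).ncard = s - 1 :=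
      Set.ncard_diff_singleton_of_mem (Or.inr hu : u ∈ L1 ∪ L2)
    have hle := Set.ncard_le_ncard hsub (Set.toFinite _)
    rw [hcal, hdiff, Set.ncard_singleton] at hle
    show s ≤ (G.neighborSet u).ncard
    omega
  have d3deg : ∀ u ∈ L3, t - 1 ≤ degN G u := by
    intro u hu
    have h := (hL3 u hu).2.2
    rw [Nat.card_eq_fintype_card, hcard] at h
    omega
  have hsk : s ≤ k := le_trans (d2deg u2 hu2) (hL2 u2 hu2).2.2
  -- connectivity
  haveI : Nonempty V := ⟨u4⟩
  have reach3 : ∀ x ∈ L3, G.Reachable x u4 := fun x hx =>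
    ((hL3 x hx).2.1 u4 hu4).reachable
  have reach2 : ∀ x ∈ L2, G.Reachable x u4 := by
    intro x hx
    obtain ⟨v3, hv3, hadj⟩ := (hL2 x hx).1
    exact hadj.reachable.trans (reach3 v3 hv3)
  have reach : ∀ x, G.Reachable x u4 := by
    intro x
    rcases hmem x with h | h | h | h
    · have hne : x ≠ u2 := by rintro rfl; exact Set.disjoint_left.mp d12 h hu2
      exact ((cl12 (Or.inl h) (Or.inr hu2) hne).reachable).trans (reach2 u2 hu2)
    · exact reach2 x h
    · exact reach3 x h
    · rcases eq_or_ne x u4 with rfl | hne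
      · exact Reachable.refl _
      · exact (cl4 h hu4 hne).reachable
  refine ⟨⟨fun a b => (reach a).trans (reach b).symm⟩, ?_, ?_⟩
  · intro u v hne hnadj
    rcases hmem u with hu | hu | hu | hu <;> rcases hmem v with hv | hv | hv | hv
    · exact absurd (cl12 (Or.inl hu) (Or.inl hv) hne) hnadj
    · exact absurd (cl12 (Or.inl hu) (Or.inr hv) hne) hnadj
    · have h1 := d1deg u hu; have h2 := d3deg v hv; omega
    · have h1 := d1deg u hu; have h2 := d4deg v hv; omega
    · exact absurd (cl12 (Or.inr hu) (Or.inl hv) hne) hnadj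
    · exact absurd (cl12 (Or.inr hu) (Or.inr hv) hne) hnadj
    · have h1 := d2deg u hu; have h2 := d3deg v hv; omega
    · have h1 := d2deg u hu; have h2 := d4deg v hv; omega
    · have h1 := d3deg u hu; have h2 := d1deg v hv; omega
    · have h1 := d3deg u hu; have h2 := d2deg v hv; omega
    · have h1 := d3deg u hu; have h2 := d3deg v hv; omega
    · exact absurd ((hL3 u hu).2.1 v hv) hnadj
    · have h1 := d4deg u hu; have h2 := d1deg v hv; omega
    · have h1 := d4deg u hu; have h2 := d2deg v hv; omega
    · exact absurd ((hL3 v hv).2.1 u hu).symm hnadj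
    · exact absurd (cl4 hu hv hne) hnadj
  · refine ⟨u1, u4, ?_, ?_, ?_⟩
    · rintro rfl; exact Set.disjoint_left.mp d14 hu1 hu4
    · exact hL1 u1 hu1 u4 (Or.inr hu4)
    · have h1 := d1deg u1 hu1; have h4 := d4deg u4 hu4; omega
end

section
/- Let k ≥ 2 be an integer and let n ≥ 2k+1 be an odd integer. Then the graph G'_{k,n} has no [2,k]-ST. -/
open SimpleGraph

/-- `G` has a `[2,k]`-ST: a spanning tree with no vertex of degree `i` for `2 ≤ i ≤ k`. -/
def HasST2k {V : Type*} (k : ℕ) (G : SimpleGraph V) : Prop :=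
  ∃ T : SimpleGraph V, T ≤ G ∧ T.IsTree ∧ ∀ v : V, ¬ (2 ≤ degN T v ∧ degN T v ≤ k)

/-- Vertex set of the graph `G'_{k,n}`: `A₀` (of size 3, with `u = Sum.inl 0`,
`v₁ = Sum.inl 1`, `v₂ = Sum.inl 2`), `A₁` and `A₂` (each of size `(n-3)/2`). -/
abbrev GknV (n : ℕ) := Fin 3 ⊕ Fin ((n - 3) / 2) ⊕ Fin ((n - 3) / 2)

/-- The graph `G'_{k,n}`: disjoint complete graphs `A₀, A₁, A₂`, together with all
edges from `u` to `W₁` (the first `k-1` vertices of `A₁`) and all edges from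
`v₁` and `v₂` to `W₂` (the first `k-1` vertices of `A₂`). -/
def Gkn (k n : ℕ) : SimpleGraph (GknV n) :=
  SimpleGraph.fromRel (fun a b =>
    (∃ x y, a = Sum.inl x ∧ b = Sum.inl y) ∨
    (∃ x y, a = Sum.inr (Sum.inl x) ∧ b = Sum.inr (Sum.inl y)) ∨
    (∃ x y, a = Sum.inr (Sum.inr x) ∧ b = Sum.inr (Sum.inr y)) ∨
    (∃ j : Fin ((n - 3) / 2), (j : ℕ) < k - 1 ∧ a = Sum.inl 0 ∧ b = Sum.inr (Sum.inl j)) ∨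
    (∃ j : Fin ((n - 3) / 2), (j : ℕ) < k - 1 ∧ (a = Sum.inl 1 ∨ a = Sum.inl 2) ∧
      b = Sum.inr (Sum.inr j)))

/-! ### Auxiliary lemmas -/

lemma adj_u' {k n : ℕ} {y : GknV n} (h : (Gkn k n).Adj (Sum.inl 0) y) :
    y = Sum.inl 1 ∨ y = Sum.inl 2 ∨
      ∃ j : Fin ((n-3)/2), (j:ℕ) < k-1 ∧ y = Sum.inr (Sum.inl j) := by
  rcases y with x | (j | j)
  · simp only [Gkn, fromRel_adj, ne_eq, Sum.inl.injEq] at h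
    obtain ⟨hne, -⟩ := h
    have : x ≠ 0 := fun hx => hne hx.symm
    fin_cases x <;> simp_all
  · simp only [Gkn, fromRel_adj] at h
    obtain ⟨-, h⟩ := h
    right; right
    simp_all
  · exfalso
    simp only [Gkn, fromRel_adj] at h
    obtain ⟨-, h⟩ := h
    simp_all

lemma adj_v' {k n : ℕ} {i : Fin 3} (hi : i = 1 ∨ i = 2) {y : GknV n}
    (h : (Gkn k n).Adj (Sum.inl i) y) :
    (∃ x : Fin 3, x ≠ i ∧ y = Sum.inl x) ∨
      ∃ j : Fin ((n-3)/2), (j:ℕ) < k-1 ∧ y = Sum.inr (Sum.inr j) := by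
  rcases y with x | (j | j)
  · simp only [Gkn, fromRel_adj, ne_eq, Sum.inl.injEq] at h
    exact Or.inl ⟨x, fun hx => h.1 hx.symm, rfl⟩
  · exfalso
    simp only [Gkn, fromRel_adj] at h
    obtain ⟨-, h⟩ := h
    rcases hi with rfl | rfl <;> simp_all
  · simp only [Gkn, fromRel_adj] at h
    obtain ⟨-, h⟩ := h
    right
    rcases hi with rfl | rfl <;> simp_all

lemma adj_A1' {k n : ℕ} {j : Fin ((n-3)/2)} {y : GknV n}
    (h : (Gkn k n).Adj (Sum.inr (Sum.inl j)) y) :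
    y = Sum.inl 0 ∨ ∃ j' : Fin ((n-3)/2), y = Sum.inr (Sum.inl j') := by
  rcases y with x | (j' | j')
  · simp only [Gkn, fromRel_adj] at h
    obtain ⟨-, h⟩ := h
    left; simp_all
  · exact Or.inr ⟨j', rfl⟩
  · exfalso
    simp only [Gkn, fromRel_adj] at h
    obtain ⟨-, h⟩ := h
    simp_all

lemma adj_A2' {k n : ℕ} {j : Fin ((n-3)/2)} {y : GknV n}
    (h : (Gkn k n).Adj (Sum.inr (Sum.inr j)) y) :
    y = Sum.inl 1 ∨ y = Sum.inl 2 ∨ ∃ j' : Fin ((n-3)/2), y = Sum.inr (Sum.inr j') := by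
  rcases y with x | (j' | j')
  · simp only [Gkn, fromRel_adj] at h
    obtain ⟨-, h⟩ := h
    simp_all
  · exfalso
    simp only [Gkn, fromRel_adj] at h
    obtain ⟨-, h⟩ := h
    simp_all
  · exact Or.inr (Or.inr ⟨j', rfl⟩)

lemma cross_lemma {V : Type*} {T : SimpleGraph V} (S : Set V) :
    ∀ {a b : V}, T.Walk a b → a ∈ S → b ∉ S → ∃ x ∈ S, ∃ y ∉ S, T.Adj x y := by
  intro a b w
  induction w with
  | nil => intro ha hb; exact absurd ha hb
  | @cons u v w' h p ih =>
    intro ha hb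
    by_cases hv : v ∈ S
    · exact ih hv hb
    · exact ⟨u, ha, v, hv, h⟩

lemma no_triangle {V : Type*} {T : SimpleGraph V} (hT : T.IsAcyclic) {a b c : V}
    (hab : T.Adj a b) (hbc : T.Adj b c) (hac : T.Adj a c) : False := by
  rw [isAcyclic_iff_path_unique] at hT
  have hq : (Walk.cons hab (Walk.cons hbc Walk.nil)).IsPath := by
    simp [Walk.isPath_def, hab.ne, hbc.ne, hac.ne]
  have heq := congrArg (fun p : T.Path a c => p.1.length)
    (hT (Path.singleton hac) ⟨Walk.cons hab (Walk.cons hbc Walk.nil), hq⟩)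
  simp [Path.singleton] at heq

lemma ncard_bound {V : Type*} {c m : ℕ} (hm : c ≤ m) (f : Fin m → V) :
    Set.ncard {x : V | ∃ j : Fin m, (j:ℕ) < c ∧ x = f j} ≤ c := by
  have hsub : {x : V | ∃ j : Fin m, (j:ℕ) < c ∧ x = f j} ⊆
      (fun i : Fin c => f (Fin.castLE hm i)) '' Set.univ := by
    rintro x ⟨j, hj, rfl⟩
    exact ⟨⟨j, hj⟩, trivial, rfl⟩
  calc Set.ncard {x : V | ∃ j : Fin m, (j:ℕ) < c ∧ x = f j}
      ≤ Set.ncard ((fun i : Fin c => f (Fin.castLE hm i)) '' Set.univ) :=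
        Set.ncard_le_ncard hsub (Set.toFinite _)
    _ ≤ Set.ncard (Set.univ : Set (Fin c)) := Set.ncard_image_le (Set.toFinite _)
    _ = c := by simp [Set.ncard_univ]

lemma forced {V : Type*} [Finite V] {T : SimpleGraph V} {u : V} {S : Set V} {k : ℕ}
    (hdeg : k + 1 ≤ (T.neighborSet u).ncard) (hsub : T.neighborSet u ⊆ S)
    (hS : S.ncard ≤ k) : False := by
  have := Set.ncard_le_ncard hsub (Set.toFinite _)
  omega

/-- Proposition 3.2: the graph `G'_{k,n}` has no `[2,k]`-ST. -/
theorem stmt8 (k n : ℕ) (hk : 2 ≤ k) (hn : 2 * k + 1 ≤ n) (hodd : Odd n) :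
    ¬ HasST2k k (Gkn k n) := by
  rintro ⟨T, hTG, hTree, hdeg⟩
  have hm : k - 1 ≤ (n - 3) / 2 := by omega
  have hm1 : 0 < (n - 3) / 2 := by omega
  have hconn := hTree.isConnected
  -- weights of the special sets
  have hW1 : Set.ncard {x : GknV n | ∃ j : Fin ((n-3)/2), (j:ℕ) < k-1 ∧
      x = Sum.inr (Sum.inl j)} ≤ k - 1 := ncard_bound hm _
  have hW2 : Set.ncard {x : GknV n | ∃ j : Fin ((n-3)/2), (j:ℕ) < k-1 ∧
      x = Sum.inr (Sum.inr j)} ≤ k - 1 := ncard_bound hm _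
  -- degrees constraint: every vertex of `T` with ≥ 2 neighbors has ≥ k+1 neighbors
  have hforce : ∀ v : GknV n, 1 < (T.neighborSet v).ncard →
      k + 1 ≤ (T.neighborSet v).ncard := by
    intro v hv
    have h := hdeg v
    simp only [degN] at h
    omega
  -- Step 1: u has a tree-neighbor in A₁
  obtain ⟨w1⟩ := hconn.preconnected (Sum.inr (Sum.inl ⟨0, hm1⟩)) (Sum.inl 0)
  obtain ⟨x, hx, y, hy, hxy⟩ := cross_lemma {x : GknV n | ∃ j, x = Sum.inr (Sum.inl j)}
    w1 ⟨_, rfl⟩ (by rintro ⟨j, h⟩; simp at h)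
  obtain ⟨j₀, rfl⟩ := hx
  have hu1 : T.Adj (Sum.inl 0) (Sum.inr (Sum.inl j₀)) := by
    rcases adj_A1' (hTG hxy) with rfl | ⟨j', rfl⟩
    · exact hxy.symm
    · exact absurd ⟨j', rfl⟩ hy
  -- Step 2: u has a tree-neighbor among v₁, v₂
  obtain ⟨w2⟩ := hconn.preconnected (Sum.inl 0) (Sum.inl 1)
  obtain ⟨x, hx, y, hy, hxy2⟩ := cross_lemma
    {x : GknV n | x = Sum.inl 0 ∨ ∃ j, x = Sum.inr (Sum.inl j)}
    w2 (Or.inl rfl) (by rintro (h | ⟨j, h⟩) <;> simp at h)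
  have H1 : T.Adj (Sum.inl 0) (Sum.inl 1) ∨ T.Adj (Sum.inl 0) (Sum.inl 2) := by
    rcases hx with rfl | ⟨j, rfl⟩
    · rcases adj_u' (hTG hxy2) with rfl | rfl | ⟨j, hj, rfl⟩
      · exact Or.inl hxy2
      · exact Or.inr hxy2
      · exact absurd (Or.inr ⟨j, rfl⟩) hy
    · rcases adj_A1' (hTG hxy2) with rfl | ⟨j', rfl⟩
      · exact absurd (Or.inl rfl) hy
      · exact absurd (Or.inr ⟨j', rfl⟩) hy
  -- Step 3: deg_T(u) ≥ k+1
  have hdegu : k + 1 ≤ (T.neighborSet (Sum.inl 0)).ncard := by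
    apply hforce
    rw [Set.one_lt_ncard (Set.toFinite _)]
    rcases H1 with h | h
    · exact ⟨_, h, _, hu1, by simp⟩
    · exact ⟨_, h, _, hu1, by simp⟩
  -- Step 4: u is T-adjacent to both v₁ and v₂
  have hA1 : T.Adj (Sum.inl 0) (Sum.inl 1) := by
    by_contra hnb
    refine forced hdegu (S := {Sum.inl 2} ∪ {x : GknV n | ∃ j : Fin ((n-3)/2),
      (j:ℕ) < k-1 ∧ x = Sum.inr (Sum.inl j)}) ?_ ?_
    · intro y hyN
      rcases adj_u' (hTG hyN) with rfl | rfl | ⟨j, hj, rfl⟩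
      · exact absurd hyN hnb
      · exact Or.inl rfl
      · exact Or.inr ⟨j, hj, rfl⟩
    · calc _ ≤ _ := Set.ncard_union_le _ _
        _ ≤ k := by rw [Set.ncard_singleton]; omega
  have hA2 : T.Adj (Sum.inl 0) (Sum.inl 2) := by
    by_contra hnb
    refine forced hdegu (S := {Sum.inl 1} ∪ {x : GknV n | ∃ j : Fin ((n-3)/2),
      (j:ℕ) < k-1 ∧ x = Sum.inr (Sum.inl j)}) ?_ ?_
    · intro y hyN
      rcases adj_u' (hTG hyN) with rfl | rfl | ⟨j, hj, rfl⟩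
      · exact Or.inl rfl
      · exact absurd hyN hnb
      · exact Or.inr ⟨j, hj, rfl⟩
    · calc _ ≤ _ := Set.ncard_union_le _ _
        _ ≤ k := by rw [Set.ncard_singleton]; omega
  -- Step 5: some vᵢ has a tree-neighbor in A₂
  obtain ⟨w3⟩ := hconn.preconnected (Sum.inr (Sum.inr ⟨0, hm1⟩)) (Sum.inl 0)
  obtain ⟨x, hx, y, hy, hxy3⟩ := cross_lemma {x : GknV n | ∃ j, x = Sum.inr (Sum.inr j)}
    w3 ⟨_, rfl⟩ (by rintro ⟨j, h⟩; simp at h)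
  obtain ⟨j₁, rfl⟩ := hx
  have H2 : T.Adj (Sum.inl 1) (Sum.inr (Sum.inr j₁)) ∨
      T.Adj (Sum.inl 2) (Sum.inr (Sum.inr j₁)) := by
    rcases adj_A2' (hTG hxy3) with rfl | rfl | ⟨j', rfl⟩
    · exact Or.inl hxy3.symm
    · exact Or.inr hxy3.symm
    · exact absurd ⟨j', rfl⟩ hy
  -- Step 6: force the edge v₁v₂ and get a triangle
  rcases H2 with hvw | hvw
  · have hdegv : k + 1 ≤ (T.neighborSet (Sum.inl 1)).ncard := by
      apply hforce
      rw [Set.one_lt_ncard (Set.toFinite _)]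
      exact ⟨_, hA1.symm, _, hvw, by simp⟩
    have hv12 : T.Adj (Sum.inl 1) (Sum.inl 2) := by
      by_contra hnb
      refine forced hdegv (S := {Sum.inl 0} ∪ {x : GknV n | ∃ j : Fin ((n-3)/2),
        (j:ℕ) < k-1 ∧ x = Sum.inr (Sum.inr j)}) ?_ ?_
      · intro y hyN
        rcases adj_v' (Or.inl rfl) (hTG hyN) with ⟨x, hx1, rfl⟩ | ⟨j, hj, rfl⟩
        · fin_cases x
          · exact Or.inl rfl
          · exact absurd rfl hx1
          · exact absurd hyN hnb
        · exact Or.inr ⟨j, hj, rfl⟩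
      · calc _ ≤ _ := Set.ncard_union_le _ _
          _ ≤ k := by rw [Set.ncard_singleton]; omega
    exact no_triangle hTree.IsAcyclic hA1 hv12 hA2
  · have hdegv : k + 1 ≤ (T.neighborSet (Sum.inl 2)).ncard := by
      apply hforce
      rw [Set.one_lt_ncard (Set.toFinite _)]
      exact ⟨_, hA2.symm, _, hvw, by simp⟩
    have hv21 : T.Adj (Sum.inl 2) (Sum.inl 1) := by
      by_contra hnb
      refine forced hdegv (S := {Sum.inl 0} ∪ {x : GknV n | ∃ j : Fin ((n-3)/2),
        (j:ℕ) < k-1 ∧ x = Sum.inr (Sum.inr j)}) ?_ ?_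
      · intro y hyN
        rcases adj_v' (Or.inr rfl) (hTG hyN) with ⟨x, hx1, rfl⟩ | ⟨j, hj, rfl⟩
        · fin_cases x
          · exact Or.inl rfl
          · exact absurd hyN hnb
          · exact absurd rfl hx1
        · exact Or.inr ⟨j, hj, rfl⟩
      · calc _ ≤ _ := Set.ncard_union_le _ _
          _ ≤ k := by rw [Set.ncard_singleton]; omega
    exact no_triangle hTree.IsAcyclic hA2 hv21 hA1
end

section
/- Let k ≥ 2 be an integer and let n ≥ n₁(k) be an odd integer. Then the graph G'_{k,n} is a connected graph of order n, satisfies σ₂(G'_{k,n}) = (n + 2k − 3)/2, and has no k-blocking set. -/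
open SimpleGraph

noncomputable def ck (k : ℕ) : ℝ :=
  Real.sqrt ((k : ℝ) * ((k : ℝ) - 1) * ((k : ℝ) + 2 * Real.sqrt (2 * (k : ℝ)) + 2))

/-- `n1 k` is the smallest positive integer `N` such that
`(m + 2k - 2)/4 - 2 * c_k * sqrt m - k^2 - 2k - 1 ≥ 0` for every integer `m ≥ N`. -/
noncomputable def n1 (k : ℕ) : ℕ :=
  sInf {N : ℕ | 0 < N ∧ ∀ m : ℕ, N ≤ m →
    0 ≤ ((m : ℝ) + 2 * k - 2) / 4 - 2 * ck k * Real.sqrt m - (k : ℝ) ^ 2 - 2 * k - 1}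

/-- `U` is a `k`-blocking set of `G`: a cutset all of whose vertices have
degree between `2` and `k` in `G`. -/
def KBlocking {V : Type*} (k : ℕ) (G : SimpleGraph V) (U : Set V) : Prop :=
  ¬ (G.induce Uᶜ).Preconnected ∧ ∀ u ∈ U, 2 ≤ degN G u ∧ degN G u ≤ k

section Helpers
open SimpleGraph

variable {k n : ℕ}

lemma card_lt' {M c : ℕ} (h : c ≤ M) : {j : Fin M | (j:ℕ) < c}.ncard = c := by
  have : {j : Fin M | (j:ℕ) < c} = Set.range (Fin.castLE h) := by
    ext j; simp [Fin.castLE]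
  rw [this, ← Nat.card_coe_set_eq, Nat.card_range_of_injective (Fin.castLE_injective h)]
  simp

lemma card_ne' {M : ℕ} (j0 : Fin M) : {j : Fin M | j ≠ j0}.ncard = M - 1 := by
  have h1 : {j : Fin M | j ≠ j0} = ({j0} : Set (Fin M))ᶜ := by ext j; simp
  have h2 := Set.ncard_add_ncard_compl ({j0} : Set (Fin M))
  rw [h1]
  simp [Nat.card_eq_fintype_card] at h2 ⊢
  omega

lemma adj_ll {i j : Fin 3} (h : i ≠ j) : (Gkn k n).Adj (Sum.inl i) (Sum.inl j) := by
  simp [Gkn, fromRel_adj, h]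

lemma adj_l0_rl {j : Fin ((n-3)/2)} :
    (Gkn k n).Adj (Sum.inl 0) (Sum.inr (Sum.inl j)) ↔ (j:ℕ) < k - 1 := by
  simp [Gkn, fromRel_adj]

lemma not_adj_l0_rr {j : Fin ((n-3)/2)} : ¬ (Gkn k n).Adj (Sum.inl 0) (Sum.inr (Sum.inr j)) := by
  simp [Gkn, fromRel_adj]

lemma adj_rl_rl {i j : Fin ((n-3)/2)} (h : i ≠ j) :
    (Gkn k n).Adj (Sum.inr (Sum.inl i)) (Sum.inr (Sum.inl j)) := by
  simp [Gkn, fromRel_adj, h]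

lemma adj_rr_rr {i j : Fin ((n-3)/2)} (h : i ≠ j) :
    (Gkn k n).Adj (Sum.inr (Sum.inr i)) (Sum.inr (Sum.inr j)) := by
  simp [Gkn, fromRel_adj, h]

lemma adj_l1_rr {j : Fin ((n-3)/2)} (h : (j:ℕ) < k - 1) :
    (Gkn k n).Adj (Sum.inl 1) (Sum.inr (Sum.inr j)) := by
  simp [Gkn, fromRel_adj, h]

lemma ns_l0 : (Gkn k n).neighborSet (Sum.inl 0) =
    (Sum.inl '' {1, 2}) ∪ ((Sum.inr ∘ Sum.inl) '' {j : Fin ((n-3)/2) | (j:ℕ) < k-1}) := by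
  ext x
  rcases x with i | j | j <;>
    simp [SimpleGraph.mem_neighborSet, Gkn, fromRel_adj, Function.comp]
  revert i; decide

lemma ns_rr {j0 : Fin ((n-3)/2)} (h : ¬ (j0:ℕ) < k - 1) :
    (Gkn k n).neighborSet (Sum.inr (Sum.inr j0)) =
    ((Sum.inr ∘ Sum.inr) '' {j : Fin ((n-3)/2) | j ≠ j0}) := by
  ext x
  rcases x with i | j | j <;>
    simp [SimpleGraph.mem_neighborSet, Gkn, fromRel_adj, Function.comp, h]
  exact not_congr eq_comm

lemma sub_rl {j0 : Fin ((n-3)/2)} :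
    ((Sum.inr ∘ Sum.inl) '' {j : Fin ((n-3)/2) | j ≠ j0}) ⊆
      (Gkn k n).neighborSet (Sum.inr (Sum.inl j0)) := by
  rintro _ ⟨j, hj, rfl⟩
  simp [SimpleGraph.mem_neighborSet, Gkn, fromRel_adj, Function.comp]
  exact fun e => hj e.symm

lemma sub_rr {j0 : Fin ((n-3)/2)} :
    ((Sum.inr ∘ Sum.inr) '' {j : Fin ((n-3)/2) | j ≠ j0}) ⊆
      (Gkn k n).neighborSet (Sum.inr (Sum.inr j0)) := by
  rintro _ ⟨j, hj, rfl⟩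
  simp [SimpleGraph.mem_neighborSet, Gkn, fromRel_adj, Function.comp]
  exact fun e => hj e.symm

lemma sub_l1 : (Sum.inl '' {0, 2}) ∪ ((Sum.inr ∘ Sum.inr) '' {j : Fin ((n-3)/2) | (j:ℕ) < k-1})
    ⊆ (Gkn k n).neighborSet (Sum.inl 1) := by
  rintro _ (⟨i, hi, rfl⟩ | ⟨j, hj, rfl⟩) <;>
    simp [SimpleGraph.mem_neighborSet, Gkn, fromRel_adj, Function.comp]
  · rcases hi with rfl | rfl <;> simp
  · exact hj

lemma sub_l2 : (Sum.inl '' {0, 1}) ∪ ((Sum.inr ∘ Sum.inr) '' {j : Fin ((n-3)/2) | (j:ℕ) < k-1})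
    ⊆ (Gkn k n).neighborSet (Sum.inl 2) := by
  rintro _ (⟨i, hi, rfl⟩ | ⟨j, hj, rfl⟩) <;>
    simp [SimpleGraph.mem_neighborSet, Gkn, fromRel_adj, Function.comp]
  · rcases hi with rfl | rfl <;> simp
  · exact hj

lemma inl_inr_disj {α β γ : Type*} (s : Set α) (t : Set β) (f : β → γ) :
    Disjoint ((Sum.inl : α → α ⊕ γ) '' s) ((Sum.inr ∘ f) '' t) := by
  simp only [Set.disjoint_left]
  rintro _ ⟨i, _, rfl⟩ ⟨j, _, h⟩
  simp at h

lemma card_union_img {M : ℕ} (s : Set (Fin 3)) (t : Set (Fin M))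
    (f : Fin M → Fin ((n-3)/2) ⊕ Fin ((n-3)/2)) (hf : Function.Injective f) :
    ((Sum.inl '' s : Set (GknV n)) ∪ ((Sum.inr ∘ f) '' t)).ncard = s.ncard + t.ncard := by
  rw [Set.ncard_union_eq (inl_inr_disj s t f) (Set.toFinite _) (Set.toFinite _),
    Set.ncard_image_of_injective _ Sum.inl_injective,
    Set.ncard_image_of_injective _ (Sum.inr_injective.comp hf)]

lemma deg_l0 (hk : 1 ≤ k) (hM : k - 1 ≤ (n-3)/2) : degN (Gkn k n) (Sum.inl 0) = k + 1 := by
  rw [degN, ns_l0, card_union_img _ _ _ Sum.inl_injective,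
    Set.ncard_pair (by decide : (1 : Fin 3) ≠ 2), card_lt' hM]
  omega

lemma deg_rr_eq {j0 : Fin ((n-3)/2)} (h : ¬ (j0:ℕ) < k - 1) :
    degN (Gkn k n) (Sum.inr (Sum.inr j0)) = (n-3)/2 - 1 := by
  rw [degN, ns_rr h, Set.ncard_image_of_injective _ (Sum.inr_injective.comp Sum.inr_injective),
    card_ne']

lemma deg_rl_ge (j0 : Fin ((n-3)/2)) : (n-3)/2 - 1 ≤ degN (Gkn k n) (Sum.inr (Sum.inl j0)) := by
  calc (n-3)/2 - 1 = ((Sum.inr ∘ Sum.inl) '' {j : Fin ((n-3)/2) | j ≠ j0} : Set (GknV n)).ncard := by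
        rw [Set.ncard_image_of_injective _ (Sum.inr_injective.comp Sum.inl_injective), card_ne']
    _ ≤ _ := Set.ncard_le_ncard sub_rl (Set.toFinite _)

lemma deg_rr_ge (j0 : Fin ((n-3)/2)) : (n-3)/2 - 1 ≤ degN (Gkn k n) (Sum.inr (Sum.inr j0)) := by
  calc (n-3)/2 - 1 = ((Sum.inr ∘ Sum.inr) '' {j : Fin ((n-3)/2) | j ≠ j0} : Set (GknV n)).ncard := by
        rw [Set.ncard_image_of_injective _ (Sum.inr_injective.comp Sum.inr_injective), card_ne']
    _ ≤ _ := Set.ncard_le_ncard sub_rr (Set.toFinite _)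

lemma deg_l1_ge (hk : 1 ≤ k) (hM : k - 1 ≤ (n-3)/2) : k + 1 ≤ degN (Gkn k n) (Sum.inl 1) := by
  have h := Set.ncard_le_ncard (sub_l1 (k := k) (n := n)) (Set.toFinite _)
  rw [card_union_img _ _ _ Sum.inr_injective, Set.ncard_pair (by decide : (0:Fin 3) ≠ 2),
    card_lt' hM] at h
  rw [degN]; omega

lemma deg_l2_ge (hk : 1 ≤ k) (hM : k - 1 ≤ (n-3)/2) : k + 1 ≤ degN (Gkn k n) (Sum.inl 2) := by
  have h := Set.ncard_le_ncard (sub_l2 (k := k) (n := n)) (Set.toFinite _)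
  rw [card_union_img _ _ _ Sum.inr_injective, Set.ncard_pair (by decide : (0:Fin 3) ≠ 1),
    card_lt' hM] at h
  rw [degN]; omega

lemma deg_ge (hk : 1 ≤ k) (hM : k - 1 ≤ (n-3)/2) (hM2 : k + 2 ≤ (n-3)/2) (v : GknV n) :
    k + 1 ≤ degN (Gkn k n) v := by
  rcases v with i | j | j
  · fin_cases i
    · show k + 1 ≤ degN (Gkn k n) (Sum.inl 0)
      rw [deg_l0 hk hM]
    · show k + 1 ≤ degN (Gkn k n) (Sum.inl 1)
      exact deg_l1_ge hk hM
    · show k + 1 ≤ degN (Gkn k n) (Sum.inl 2)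
      exact deg_l2_ge hk hM
  · have := deg_rl_ge (k := k) j; omega
  · have := deg_rr_ge (k := k) j; omega

lemma n1_set_nonempty (k : ℕ) (hk : 2 ≤ k) : {N : ℕ | 0 < N ∧ ∀ m : ℕ, N ≤ m →
    0 ≤ ((m : ℝ) + 2 * k - 2) / 4 - 2 * ck k * Real.sqrt m - (k : ℝ) ^ 2 - 2 * k - 1}.Nonempty := by
  have hc0 : 0 ≤ ck k := Real.sqrt_nonneg _
  set C : ℝ := 8 * ck k + 4 * ((k:ℝ)^2 + 2*k + 1) + 1 with hC
  have hK : (2:ℝ) ≤ (k:ℝ) := by exact_mod_cast hk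
  have hC1 : 1 ≤ C := by nlinarith
  refine ⟨⌈C^2⌉₊, ?_, ?_⟩
  · have := Nat.one_le_ceil_iff.mpr (by nlinarith : (0:ℝ) < C^2)
    omega
  · intro m hm
    have hmC : C^2 ≤ (m:ℝ) := le_trans (Nat.le_ceil _) (by exact_mod_cast hm)
    have hs : C ≤ Real.sqrt m := by
      have := Real.sqrt_le_sqrt hmC
      rwa [Real.sqrt_sq (by linarith)] at this
    have hs1 : 1 ≤ Real.sqrt m := le_trans hC1 hs
    have hmm : Real.sqrt m * Real.sqrt m = m := Real.mul_self_sqrt (by positivity)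
    nlinarith [mul_le_mul_of_nonneg_right hs (by linarith : (0:ℝ) ≤ Real.sqrt m)]

lemma n_big {k n : ℕ} (hk : 2 ≤ k) (hn : n1 k ≤ n) : 4*k^2 + 6*k + 6 ≤ n := by
  have h := (Nat.sInf_mem (n1_set_nonempty k hk)).2 n hn
  have hc0 : 0 ≤ ck k := Real.sqrt_nonneg _
  have hs0 : 0 ≤ Real.sqrt n := Real.sqrt_nonneg _
  have : (4*k^2 + 6*k + 6 : ℝ) ≤ (n:ℝ) := by nlinarith
  exact_mod_cast this

end Helpers

/-- The graph `G'_{k,n}` (for odd `n ≥ n₁(k)`) is a connected graph of order `n`,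
satisfies `σ₂(G'_{k,n}) = (n + 2k - 3)/2`, and has no `k`-blocking set. -/
theorem stmt9 (k n : ℕ) (hk : 2 ≤ k) (hn : n1 k ≤ n) (hodd : Odd n) :
    (Gkn k n).Connected ∧ Fintype.card (GknV n) = n ∧
    (∀ u v : GknV n, u ≠ v → ¬ (Gkn k n).Adj u v →
      (n + 2 * k - 3) / 2 ≤ degN (Gkn k n) u + degN (Gkn k n) v) ∧
    (∃ u v : GknV n, u ≠ v ∧ ¬ (Gkn k n).Adj u v ∧
      degN (Gkn k n) u + degN (Gkn k n) v = (n + 2 * k - 3) / 2) ∧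
    ¬ ∃ U : Set (GknV n), KBlocking k (Gkn k n) U := by
  have hbig := n_big hk hn
  have hM3 : n = 2 * ((n-3)/2) + 3 := by
    obtain ⟨t, rfl⟩ := hodd; omega
  have hMk : k + 2 ≤ (n-3)/2 := by omega
  have hM1 : k - 1 ≤ (n-3)/2 := by omega
  have hk1 : 1 ≤ k := by omega
  have hMpos : 0 < (n-3)/2 := by omega
  have h00 : ((⟨0, hMpos⟩ : Fin ((n-3)/2)) : ℕ) < k - 1 := by
    simp; omega
  have hreach : ∀ x : GknV n, (Gkn k n).Reachable (Sum.inl 0) x := by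
    intro x
    rcases x with i | j | j
    · by_cases hi : (0 : Fin 3) = i
      · rw [← hi]
      · exact (adj_ll hi).reachable
    · have r1 : (Gkn k n).Reachable (Sum.inl 0) (Sum.inr (Sum.inl ⟨0, hMpos⟩)) :=
        (adj_l0_rl.mpr h00).reachable
      by_cases hj : (⟨0, hMpos⟩ : Fin ((n-3)/2)) = j
      · rw [← hj]; exact r1
      · exact r1.trans (adj_rl_rl hj).reachable
    · have r1 : (Gkn k n).Reachable (Sum.inl 0) (Sum.inr (Sum.inr ⟨0, hMpos⟩)) :=
        ((adj_ll (by decide : (0:Fin 3) ≠ 1)).reachable).trans (adj_l1_rr h00).reachable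
      by_cases hj : (⟨0, hMpos⟩ : Fin ((n-3)/2)) = j
      · rw [← hj]; exact r1
      · exact r1.trans (adj_rr_rr hj).reachable
  have : Nonempty (GknV n) := ⟨Sum.inl 0⟩
  have hconn : (Gkn k n).Connected := ⟨fun a b => (hreach a).symm.trans (hreach b)⟩
  refine ⟨hconn, ?_, ?_, ?_, ?_⟩
  · simp only [GknV, Fintype.card_sum, Fintype.card_fin]
    omega
  · intro u v hne hnadj
    have hgoal : (n + 2*k - 3)/2 = (n-3)/2 + k := by omega
    rw [hgoal]
    rcases u with i | x | x <;> rcases v with i' | y | y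
    · exact absurd (adj_ll (fun h => hne (congrArg _ h))) hnadj
    · have h1 := deg_ge hk1 hM1 hMk (Sum.inl i : GknV n)
      have h2 := deg_rl_ge (k := k) y; omega
    · have h1 := deg_ge hk1 hM1 hMk (Sum.inl i : GknV n)
      have h2 := deg_rr_ge (k := k) y; omega
    · have h1 := deg_ge hk1 hM1 hMk (Sum.inl i' : GknV n)
      have h2 := deg_rl_ge (k := k) x; omega
    · have h1 := deg_ge hk1 hM1 hMk (Sum.inr (Sum.inl y) : GknV n)
      have h2 := deg_rl_ge (k := k) x; omega
    · have h1 := deg_ge hk1 hM1 hMk (Sum.inr (Sum.inr y) : GknV n)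
      have h2 := deg_rl_ge (k := k) x; omega
    · have h1 := deg_ge hk1 hM1 hMk (Sum.inl i' : GknV n)
      have h2 := deg_rr_ge (k := k) x; omega
    · have h1 := deg_ge hk1 hM1 hMk (Sum.inr (Sum.inl y) : GknV n)
      have h2 := deg_rr_ge (k := k) x; omega
    · have h1 := deg_ge hk1 hM1 hMk (Sum.inr (Sum.inr y) : GknV n)
      have h2 := deg_rr_ge (k := k) x; omega
  · refine ⟨Sum.inl 0, Sum.inr (Sum.inr ⟨k-1, by omega⟩), by simp, not_adj_l0_rr, ?_⟩
    rw [deg_l0 hk1 hM1, deg_rr_eq (by simp)]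
    omega
  · rintro ⟨U, hU1, hU2⟩
    have hUe : U = ∅ := Set.eq_empty_iff_forall_notMem.mpr fun u hu => by
      have h1 := (hU2 u hu).2
      have h2 := deg_ge hk1 hM1 hMk u
      omega
    rw [hUe, Set.compl_empty] at hU1
    exact hU1 (((induceUnivIso (Gkn k n)).preconnected_iff).mpr hconn.preconnected)
end

section
/- Let k ≥ 2 be an integer. If a connected graph G has a k-blocking set, then G has no [2,k]-ST. -/
open SimpleGraph

/-- Internal vertices of a path avoid the set of vertices of degree ≤ 1. -/
lemma path_support_subset {V : Type*} [Finite V] {T : SimpleGraph V} {U : Set V}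
    (hU : ∀ u ∈ U, degN T u ≤ 1) :
    ∀ {x y : V} (p : T.Walk x y), p.IsPath → x ∈ Uᶜ → y ∈ Uᶜ →
      ∀ v ∈ p.support, v ∈ Uᶜ := by
  intro x y p
  induction p with
  | nil =>
    intro _ hx _ v hv
    simp only [SimpleGraph.Walk.support_nil, List.mem_singleton] at hv
    exact hv ▸ hx
  | @cons a b c h q ih =>
    intro hp hx hy v hv
    have hqp : q.IsPath := hp.of_cons
    have hb : b ∈ Uᶜ := by
      cases q with
      | nil => exact hy
      | @cons b d c h2 r =>
        -- b has two distinct neighbors a and d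
        intro hbU
        have hdeg := hU b hbU
        have hxne : a ≠ d := by
          have := hp.support_nodup
          simp only [SimpleGraph.Walk.support_cons, List.nodup_cons] at this
          intro had
          exact this.1 (by subst had; simp)
        have h2' : 1 < (T.neighborSet b).ncard := by
          rw [Set.one_lt_ncard_iff (Set.toFinite _)]
          exact ⟨a, d, h.symm, h2, hxne⟩
        exact absurd hdeg (by simpa [degN] using h2'.not_ge)
    simp only [SimpleGraph.Walk.support_cons, List.mem_cons] at hv
    rcases hv with rfl | hv
    · exact hx
    · exact ih hqp hb hy v hv

lemma reachable_induce {V : Type*} {T : SimpleGraph V} {S : Set V} :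
    ∀ {x y : V} (p : T.Walk x y) (hsub : ∀ v ∈ p.support, v ∈ S)
      (hx : x ∈ S) (hy : y ∈ S),
      (T.induce S).Reachable ⟨x, hx⟩ ⟨y, hy⟩ := by
  intro x y p
  induction p with
  | nil => intro _ hx _; rfl
  | @cons a b c h q ih =>
    intro hsub hx hy
    have hb : b ∈ S := hsub b (by simp)
    have hadj : (T.induce S).Adj ⟨a, hx⟩ ⟨b, hb⟩ := h
    exact (hadj.reachable).trans (ih (fun v hv => hsub v (by simp [hv])) hb hy)

/-- If a connected graph `G` has a `k`-blocking set, then `G` has no `[2,k]`-ST. -/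
theorem stmt11 {V : Type*} [Fintype V] (k : ℕ) (hk : 2 ≤ k) (G : SimpleGraph V)
    (hconn : G.Connected) (hB : ∃ U : Set V, KBlocking k G U) :
    ¬ HasST2k k G := by
  classical
  rintro ⟨T, hle, hT, hdeg⟩
  obtain ⟨U, hncon, hUdeg⟩ := hB
  -- every vertex of U has degree ≤ 1 in T
  have hU1 : ∀ u ∈ U, degN T u ≤ 1 := by
    intro u hu
    have hle' : degN T u ≤ degN G u :=
      Set.ncard_le_ncard (fun w hw => hle hw) (Set.toFinite _)
    have := hdeg u
    have := (hUdeg u hu).2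
    omega
  apply hncon
  intro x y
  obtain ⟨p⟩ := hT.isConnected.preconnected x.1 y.1
  have hsub : ∀ v ∈ (p.toPath : T.Walk x.1 y.1).support, v ∈ Uᶜ :=
    path_support_subset hU1 _ p.toPath.2 x.2 y.2
  have hr := reachable_induce (p.toPath : T.Walk x.1 y.1) hsub x.2 y.2
  exact hr.mono (fun a b hab => hle hab)
end

section
/- Let k ≥ 2 and n ≥ 2k+1 be integers and let G be a graph in the family 𝒢_{k,n} with defining partition L₁, L₂, L₃, L₄. Then L₂ is a k-blocking set of G. -/
open SimpleGraph

/-- For `G ∈ 𝒢_{k,n}` with defining partition `L₁, L₂, L₃, L₄`, the set `L₂`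
is a `k`-blocking set of `G`. -/
theorem stmt12 {V : Type*} [Fintype V] (k n : ℕ) (hk : 2 ≤ k) (hn : 2 * k + 1 ≤ n)
    (hcard : Fintype.card V = n) (G : SimpleGraph V) (L1 L2 L3 L4 : Set V)
    (hG : GFamilyWith k G L1 L2 L3 L4) :
    KBlocking k G L2 := by
  obtain ⟨h1, h2, h3, h4, huniv, d12, d13, d14, d23, d24, d34, cl12, cl4, hL1, hL2, hL3⟩ := hG
  constructor
  · intro hpc
    obtain ⟨u1, hu1⟩ := h1
    obtain ⟨u4, hu4⟩ := h4
    have hu1' : u1 ∈ L2ᶜ := fun h => d12.ne_of_mem hu1 h rfl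
    have hu4' : u4 ∈ L2ᶜ := fun h => (d24.ne_of_mem h hu4) rfl
    have key : ∀ {a b : ↥L2ᶜ}, (G.induce L2ᶜ).Walk a b → (a : V) ∈ L1 → (b : V) ∈ L1 := by
      intro a b p
      induction p with
      | nil => exact id
      | @cons a c b h p ih =>
        intro ha
        apply ih
        have hadj : G.Adj (a : V) (c : V) := h
        have hc : (c : V) ∈ Set.univ := Set.mem_univ _
        rw [← huniv] at hc
        rcases hc with ((hc | hc) | hc) | hc
        · exact hc
        · exact absurd hc c.2
        · exact absurd hadj (hL1 _ ha _ (Or.inl hc))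
        · exact absurd hadj (hL1 _ ha _ (Or.inr hc))
    obtain ⟨p⟩ := hpc ⟨u1, hu1'⟩ ⟨u4, hu4'⟩
    exact (d14.ne_of_mem (key p hu1) hu4) rfl
  · intro u hu
    obtain ⟨⟨w, hw3, hw⟩, _, hdk⟩ := hL2 u hu
    refine ⟨?_, hdk⟩
    obtain ⟨v, hv1⟩ := h1
    have hv : G.Adj u v := cl12 (Or.inr hu) (Or.inl hv1) (fun h => (d12.ne_of_mem hv1 hu) h.symm)
    have hvw : v ≠ w := fun h => (d13.ne_of_mem hv1 hw3) h
    have hsub : {v, w} ⊆ G.neighborSet u := by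
      intro x hx
      rcases hx with h | h
      · exact h ▸ hv
      · exact h ▸ hw
    calc 2 = ({v, w} : Set V).ncard := (Set.ncard_pair hvw).symm
    _ ≤ (G.neighborSet u).ncard := Set.ncard_le_ncard hsub (Set.toFinite _)
end

section
/- Let G be a graph, let s₀ be a real number with σ₂(G) ≥ s₀, and let S = {u ∈ V(G) : d_G(u) < s₀/2}. Then for every u ∈ S and every component Q of G − S, we have V(Q) \ N_G(u) ≠ ∅. -/
open SimpleGraph

/-- Claim 3.2: with `σ₂(G) ≥ s₀` and `S = {u : d_G(u) < s₀/2}`, for every `u ∈ S` and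
every component `Q` of `G - S` we have `V(Q) \ N_G(u) ≠ ∅`. -/
theorem stmt16 {V : Type*} [Fintype V] (G : SimpleGraph V) (s0 : ℝ) (S : Set V)
    (hS : S = {u : V | (degN G u : ℝ) < s0 / 2})
    (hsigma : ∀ u v : V, u ≠ v → ¬ G.Adj u v → s0 ≤ (degN G u : ℝ) + degN G v)
    (u : V) (hu : u ∈ S) (Q : (G.induce Sᶜ).ConnectedComponent) :
    ∃ v : ↥(Sᶜ), (G.induce Sᶜ).connectedComponentMk v = Q ∧ (v : V) ∉ G.neighborSet u := by
  have hus : (degN G u : ℝ) < s0 / 2 := by rw [hS] at hu; exact hu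
  obtain ⟨v, hv⟩ := Q.exists_rep
  by_cases hadj : (v : V) ∈ G.neighborSet u
  · -- find a neighbor w of v not adjacent to u and ≠ u
    have hvS : s0 / 2 ≤ (degN G (v : V) : ℝ) := by
      have h := v.2
      simp only [hS, Set.mem_compl_iff, Set.mem_setOf_eq] at h
      exact not_lt.mp h
    have hex : ∃ w : V, G.Adj (v : V) w ∧ w ∉ G.neighborSet u ∧ w ≠ u := by
      by_contra h
      push_neg at h
      have hsub : G.neighborSet (v : V) ⊆ insert u (G.neighborSet u) \ {(v : V)} := by
        intro w hw
        have hadjw : G.Adj (v : V) w := hw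
        constructor
        · rcases Classical.em (w ∈ G.neighborSet u) with h1 | h1
          · exact Set.mem_insert_of_mem _ h1
          · exact (h w hadjw h1) ▸ Set.mem_insert _ _
        · intro hwe
          exact G.loopless.irrefl _ (hwe ▸ hadjw)
      have hv_mem : (v : V) ∈ insert u (G.neighborSet u) := Set.mem_insert_of_mem _ hadj
      have hcard : degN G (v : V) ≤ degN G u := by
        have h1 : (G.neighborSet (v : V)).ncard ≤
            (insert u (G.neighborSet u) \ {(v : V)}).ncard :=
          Set.ncard_le_ncard hsub ((Set.toFinite _).diff)
        have h2 : (insert u (G.neighborSet u) \ {(v : V)}).ncard =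
            (insert u (G.neighborSet u)).ncard - 1 := by
          rw [Set.ncard_diff_singleton_of_mem hv_mem]
        have h3 : (insert u (G.neighborSet u)).ncard = (G.neighborSet u).ncard + 1 := by
          rw [Set.ncard_insert_of_notMem (by simp) (Set.toFinite _)]
        unfold degN
        omega
      have : (degN G (v : V) : ℝ) ≤ degN G u := by exact_mod_cast hcard
      linarith
    obtain ⟨w, hvw, hwu, hwne⟩ := hex
    have hwS : w ∈ Sᶜ := by
      simp only [hS, Set.mem_compl_iff, Set.mem_setOf_eq]
      intro hwlt
      have hnadj : ¬ G.Adj u w := hwu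
      have := hsigma u w (Ne.symm hwne) hnadj
      linarith
    refine ⟨⟨w, hwS⟩, ?_, hwu⟩
    have hadj' : (G.induce Sᶜ).Adj ⟨w, hwS⟩ v := by
      exact hvw.symm
    rw [ConnectedComponent.connectedComponentMk_eq_of_adj hadj']
    exact hv
  · exact ⟨v, hv, hadj⟩
end

section
/- Let G be a graph, let t be a nonnegative real number with π₂(G) ≥ t², and let S = {u ∈ V(G) : d_G(u) < t}. Then for every u ∈ S and every component Q of G − S, we have V(Q) \ N_G(u) ≠ ∅. -/
open SimpleGraph

/-- Claim 4.1: with `π₂(G) ≥ t²` and `S = {u : d_G(u) < t}`, for every `u ∈ S` and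
every component `Q` of `G - S` we have `V(Q) \ N_G(u) ≠ ∅`. -/
theorem stmt17 {V : Type*} [Fintype V] (G : SimpleGraph V) (t : ℝ) (ht : 0 ≤ t) (S : Set V)
    (hS : S = {u : V | (degN G u : ℝ) < t})
    (hpi : ∀ u v : V, u ≠ v → ¬ G.Adj u v → t ^ 2 ≤ (degN G u : ℝ) * degN G v)
    (u : V) (hu : u ∈ S) (Q : (G.induce Sᶜ).ConnectedComponent) :
    ∃ v : ↥(Sᶜ), (G.induce Sᶜ).connectedComponentMk v = Q ∧ (v : V) ∉ G.neighborSet u := by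
  by_contra hcon
  push_neg at hcon
  -- every vertex of Q is a neighbor of u
  obtain ⟨v, hvQ⟩ := Q.exists_rep
  have hu' : (degN G u : ℝ) < t := by rw [hS] at hu; exact hu
  -- the vertex set of Q inside V
  set QV : Set V := {w | ∃ hw : w ∈ Sᶜ, (G.induce Sᶜ).connectedComponentMk ⟨w, hw⟩ = Q}
    with hQV
  have hQVc : QV ⊆ Sᶜ := fun w hw => hw.1
  have hvQV : (v : V) ∈ QV := ⟨v.2, hvQ⟩
  have hvS : (v : V) ∈ Sᶜ := v.2
  have hmemS : ∀ w : V, (degN G w : ℝ) < t → w ∈ S := fun w hw => by rw [hS]; exact hw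
  have hvdeg : t ≤ (degN G v : ℝ) := by
    by_contra hlt
    exact hvS (hmemS _ (lt_of_not_ge hlt))
  -- u is adjacent to all of S \ {u} and all of QV
  have hsub1 : (S \ {u}) ∪ QV ⊆ G.neighborSet u := by
    rintro w (⟨hwS, hwne⟩ | hwQ)
    · by_contra hadj
      have hne : u ≠ w := fun h => hwne (h ▸ rfl)
      have := hpi u w hne hadj
      have hw' : (degN G w : ℝ) < t := by rw [hS] at hwS; exact hwS
      nlinarith [Nat.cast_nonneg (α := ℝ) (degN G u), Nat.cast_nonneg (α := ℝ) (degN G w)]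
    · obtain ⟨hw, hQ⟩ := hwQ
      exact hcon ⟨w, hw⟩ hQ
  -- neighbors of v lie in S ∪ (QV \ {v})
  have hsub2 : G.neighborSet (v : V) ⊆ S ∪ (QV \ {(v : V)}) := by
    intro w hw
    by_cases hwS : w ∈ S
    · exact Or.inl hwS
    · right
      have hadj : (G.induce Sᶜ).Adj v ⟨w, hwS⟩ := by
        simpa [comap_adj] using hw
      have hcomp : (G.induce Sᶜ).connectedComponentMk ⟨w, hwS⟩ = Q := by
        rw [← hvQ]
        exact ConnectedComponent.sound hadj.symm.reachable
      refine ⟨⟨hwS, hcomp⟩, ?_⟩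
      intro h
      exact G.loopless.irrefl (v : V) (h ▸ hw)
  -- cardinality computations
  have hfin : ∀ s : Set V, s.Finite := fun s => s.toFinite
  have hdisj : Disjoint (S \ {u}) QV :=
    Set.disjoint_of_subset (Set.diff_subset) hQVc disjoint_compl_right
  have h1 : (S \ {u}).ncard + QV.ncard ≤ degN G u := by
    rw [← Set.ncard_union_eq hdisj (hfin _) (hfin _)]
    exact Set.ncard_le_ncard hsub1 (hfin _)
  have h2 : degN G (v : V) ≤ S.ncard + (QV \ {(v : V)}).ncard :=
    le_trans (Set.ncard_le_ncard hsub2 (hfin _)) (Set.ncard_union_le _ _)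
  have e1 : (S \ {u}).ncard + 1 = S.ncard := Set.ncard_diff_singleton_add_one hu (hfin _)
  have e2 : (QV \ {(v : V)}).ncard + 1 = QV.ncard :=
    Set.ncard_diff_singleton_add_one hvQV (hfin _)
  have hle : degN G (v : V) ≤ degN G u := by omega
  have : (degN G (v : V) : ℝ) ≤ (degN G u : ℝ) := Nat.cast_le.mpr hle
  linarith
end

section
/- For every integer k ≥ 2, we have n₁(k) > k³. -/
open SimpleGraph

/-- For every integer `k ≥ 2`, `n₁(k) > k³`. -/
theorem stmt19 (k : ℕ) (hk : 2 ≤ k) : k ^ 3 < n1 k := by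
  have hc : 0 ≤ ck k := Real.sqrt_nonneg _
  have hk2 : (2:ℝ) ≤ (k:ℝ) := by exact_mod_cast hk
  set C : ℝ := (k:ℝ)^2 + 2*k + 1 with hC
  have hCpos : 0 ≤ C := by positivity
  obtain ⟨n, hn⟩ := exists_nat_ge (4 * ck k + Real.sqrt (16 * (ck k)^2 + 4 * C))
  have hSne : (n^2 + 1) ∈ {N : ℕ | 0 < N ∧ ∀ m : ℕ, N ≤ m →
      0 ≤ ((m : ℝ) + 2 * k - 2) / 4 - 2 * ck k * Real.sqrt m - (k : ℝ) ^ 2 - 2 * k - 1} := by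
    constructor
    · positivity
    · intro m hm
      have hm' : ((n:ℝ))^2 ≤ (m:ℝ) := by
        have : (n^2 : ℕ) ≤ m := le_trans (Nat.le_succ _) hm
        exact_mod_cast this
      have hsm : (n:ℝ) ≤ Real.sqrt m := by
        rw [show ((n:ℝ)) = Real.sqrt ((n:ℝ)^2) from (Real.sqrt_sq n.cast_nonneg).symm]
        exact Real.sqrt_le_sqrt hm'
      set t := Real.sqrt m with ht
      have htR : 4 * ck k + Real.sqrt (16 * (ck k)^2 + 4 * C) ≤ t := le_trans hn hsm
      have ht2 : t^2 = m := Real.sq_sqrt (Nat.cast_nonneg m)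
      have hroot : Real.sqrt (16 * (ck k)^2 + 4 * C) ≤ t - 4 * ck k := by linarith
      have h0 : 0 ≤ 16 * (ck k)^2 + 4 * C := by positivity
      have hsq : 16 * (ck k)^2 + 4 * C ≤ (t - 4 * ck k)^2 := by
        nlinarith [Real.sq_sqrt h0, Real.sqrt_nonneg (16 * (ck k)^2 + 4 * C)]
      nlinarith [ht2]
  have hgt : ∀ N ∈ {N : ℕ | 0 < N ∧ ∀ m : ℕ, N ≤ m →
      0 ≤ ((m : ℝ) + 2 * k - 2) / 4 - 2 * ck k * Real.sqrt m - (k : ℝ) ^ 2 - 2 * k - 1},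
      k^3 < N := by
    intro N hN
    by_contra h
    push_neg at h
    have hfk := hN.2 (k^3) h
    have hck : (k:ℝ)^3 / 2 ≤ (ck k)^2 := by
      have hsq0 := Real.sqrt_nonneg (2*(k:ℝ))
      have h1 : 0 ≤ (k:ℝ) * ((k:ℝ) - 1) * ((k:ℝ) + 2 * Real.sqrt (2*(k:ℝ)) + 2) :=
        mul_nonneg (mul_nonneg (by linarith) (by linarith)) (by linarith)
      have h2 : (ck k)^2 = (k:ℝ) * ((k:ℝ) - 1) * ((k:ℝ) + 2 * Real.sqrt (2*(k:ℝ)) + 2) :=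
        Real.sq_sqrt h1
      have key1 : (k:ℝ)^3/2 ≤ (k:ℝ)*((k:ℝ)-1)*(k:ℝ) := by nlinarith
      have key2 : 0 ≤ (k:ℝ)*((k:ℝ)-1)*(2 * Real.sqrt (2*(k:ℝ)) + 2) :=
        mul_nonneg (mul_nonneg (by linarith) (by linarith)) (by linarith)
      nlinarith
    set s := Real.sqrt ((k^3 : ℕ) : ℝ) with hs
    have hsnn : 0 ≤ s := Real.sqrt_nonneg _
    have hs2 : s^2 = ((k^3 : ℕ) : ℝ) := Real.sq_sqrt (Nat.cast_nonneg _)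
    have hcast : ((k^3 : ℕ) : ℝ) = (k:ℝ)^3 := by push_cast; ring
    rw [hcast] at hs2
    rw [hcast] at hfk
    -- hfk : 0 ≤ (k^3 + 2k - 2)/4 - 2 * ck k * s - k^2 - 2k - 1
    -- but 4 (ck k)^2 s^2 ≥ 2 k^6 > ((k^3+2k-2)/4)^2, contradiction
    have hk3 : (k:ℝ) ≤ (k:ℝ)^3 := by nlinarith
    nlinarith [mul_le_mul hck (le_of_eq hs2.symm) (by positivity : (0:ℝ) ≤ (k:ℝ)^3) (by positivity : (0:ℝ) ≤ (ck k)^2),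
      mul_nonneg hc hsnn, sq_nonneg (2 * ck k * s - (k:ℝ)^3 / 2)]
  exact hgt _ (Nat.sInf_mem ⟨_, hSne⟩)
end
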